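/- Every finite chordal graph has at least one simplicial vertex, and every non-complete finite chordal graph has at least two non-adjacent simplicial vertices. -/

import Mathlib

open scoped BigOperators

/-- A graph is chordal if every cycle of length at least four has a chord. -/
def IsChordal {V : Type*} (Γ : SimpleGraph V) : Prop :=
  ∀ ⦃v : V⦄ (w : Γ.Walk v v), w.IsCycle → 4 ≤ w.length →
    ∃ i j : ℕ, i + 2 ≤ j ∧ j < w.length ∧ ¬(i = 0 ∧ j + 1 = w.length) ∧
      Γ.Adj (w.getVert i) (w.getVert j)

/-- A vertex is simplicial if its neighborhood induces a complete subgraph. -/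
def IsSimplicial {V : Type*} (Γ : SimpleGraph V) (v : V) : Prop :=
  ∀ u w : V, Γ.Adj v u → Γ.Adj v w → u ≠ w → Γ.Adj u w

open SimpleGraph Walk

namespace ChordalAux

variable {V : Type*} {G : SimpleGraph V}

/-- Prefix of a walk up to index `n`. -/
def wtake {u v : V} : (p : G.Walk u v) → (n : ℕ) → G.Walk u (p.getVert n)
  | .nil, _ => .nil
  | .cons h q, 0 => Walk.nil.copy rfl (Walk.getVert_zero (Walk.cons h q)).symm
  | .cons h q, (n+1) => (Walk.cons h (wtake q n)).copy rfl (Walk.getVert_cons_succ _ h).symm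

lemma length_wtake {u v : V} (p : G.Walk u v) (n : ℕ) (hn : n ≤ p.length) :
    (wtake p n).length = n := by
  induction p generalizing n with
  | nil => simp at hn; simp [hn, wtake]
  | cons h q ih =>
    cases n with
    | zero => simp [wtake]
    | succ n => simp only [wtake, Walk.length_copy, Walk.length_cons]
                rw [ih n (by simpa using hn)]

lemma support_wtake_subset {u v : V} (p : G.Walk u v) (n : ℕ) :
    (wtake p n).support ⊆ p.support := by
  induction p generalizing n with
  | nil => intro x hx; simpa [wtake] using hx
  | cons h q ih =>
    cases n with
    | zero => intro x hx; simp [wtake] at hx; simp [hx]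
    | succ n =>
      intro x hx
      simp only [wtake, Walk.support_copy, Walk.support_cons, List.mem_cons] at hx
      rcases hx with rfl | hx
      · simp
      · simp [ih n hx]

lemma length_drop {u v : V} (p : G.Walk u v) (n : ℕ) :
    (p.drop n).length = p.length - n := by
  induction p generalizing n with
  | nil => simp [Walk.drop]
  | cons h q ih =>
    cases n with
    | zero => simp [Walk.drop]
    | succ n => simp only [Walk.drop, Walk.length_copy, Walk.length_cons]
                erw [ih n]; omega

lemma support_drop_subset {u v : V} (p : G.Walk u v) (n : ℕ) :
    (p.drop n).support ⊆ p.support := by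
  induction p generalizing n with
  | nil => intro x hx; simpa [Walk.drop] using hx
  | cons h q ih =>
    cases n with
    | zero => intro x hx; simpa [Walk.drop] using hx
    | succ n =>
      intro x hx
      simp only [Walk.drop, Walk.support_copy] at hx
      simp [ih n hx]

/-- Shortcut a walk along a chord. -/
lemma exists_shortcut {u v : V} (p : G.Walk u v) {i j : ℕ}
    (hij : i + 2 ≤ j) (hj : j ≤ p.length)
    (h : G.Adj (p.getVert i) (p.getVert j)) :
    ∃ q : G.Walk u v, q.length < p.length ∧ q.support ⊆ p.support := by
  refine ⟨(wtake p i).append (Walk.cons h (p.drop j)), ?_, ?_⟩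
  · rw [Walk.length_append, Walk.length_cons, length_wtake p i (by omega), length_drop]
    omega
  · intro x hx
    rw [Walk.mem_support_append_iff] at hx
    rcases hx with hx | hx
    · exact support_wtake_subset p i hx
    · rcases List.mem_cons.mp (by simpa using hx) with rfl | hx
      · exact (Walk.mem_support_iff_exists_getVert).mpr ⟨i, rfl, by omega⟩
      · exact List.mem_of_mem_drop hx

lemma IsPath.getVert_injOn {u v : V} {p : G.Walk u v} (hp : p.IsPath) :
    ∀ {i j : ℕ}, i ≤ p.length → j ≤ p.length → p.getVert i = p.getVert j → i = j := by
  induction p with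
  | nil => intro i j hi hj _; simp at hi hj; omega
  | cons h q ih =>
    intro i j hi hj hij
    have hnodup := hp.support_nodup
    rw [Walk.support_cons, List.nodup_cons] at hnodup
    have hq : q.IsPath := (Walk.cons_isPath_iff _ _).mp hp |>.1
    cases i with
    | zero => cases j with
      | zero => rfl
      | succ j =>
        exfalso
        apply hnodup.1
        rw [Walk.mem_support_iff_exists_getVert]
        exact ⟨j, by simpa [Walk.getVert_cons_succ] using hij.symm, by simpa using hj⟩
    | succ i => cases j with
      | zero =>
        exfalso
        apply hnodup.1
        rw [Walk.mem_support_iff_exists_getVert]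
        exact ⟨i, by simpa [Walk.getVert_cons_succ] using hij, by simpa using hi⟩
      | succ j =>
        have := ih hq (by simpa using hi) (by simpa using hj)
          (by simpa [Walk.getVert_cons_succ] using hij)
        omega


variable {V : Type*} {G : SimpleGraph V}

/-- Reachability within a set of vertices. -/
def RIn (G : SimpleGraph V) (t : Set V) (u v : V) : Prop :=
  ∃ p : G.Walk u v, ∀ x ∈ p.support, x ∈ t

lemma RIn.refl {t : Set V} {u : V} (hu : u ∈ t) : RIn G t u u :=
  ⟨Walk.nil, by simpa using hu⟩

lemma RIn.symm {t : Set V} {u v : V} (h : RIn G t u v) : RIn G t v u := by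
  obtain ⟨p, hp⟩ := h
  exact ⟨p.reverse, fun x hx => hp x (by simpa [Walk.support_reverse] using hx)⟩

lemma RIn.trans {t : Set V} {u v w : V} (h : RIn G t u v) (h' : RIn G t v w) :
    RIn G t u w := by
  obtain ⟨p, hp⟩ := h; obtain ⟨q, hq⟩ := h'
  refine ⟨p.append q, fun x hx => ?_⟩
  rcases (Walk.mem_support_append_iff p q).mp hx with hx | hx
  · exact hp x hx
  · exact hq x hx

lemma RIn.adj {t : Set V} {u v : V} (hu : u ∈ t) (hv : v ∈ t) (h : G.Adj u v) :
    RIn G t u v :=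
  ⟨Walk.cons h Walk.nil, by intro x hx; simp at hx; rcases hx with rfl | rfl <;> assumption⟩

/-- Every vertex on an in-`t` walk starting at an in-`t`-reachable vertex is reachable. -/
lemma RIn.mem_support {t : Set V} {a u z : V} (h : RIn G t a u)
    (p : G.Walk u z) (hp : ∀ x ∈ p.support, x ∈ t) {v : V} (hv : v ∈ p.support) :
    RIn G t a v := by
  induction p with
  | nil => simp at hv; subst hv; exact h
  | @cons u c z hadj q ih =>
    rcases (by simpa using hv : v = u ∨ v ∈ q.support) with rfl | hv
    · exact h
    · have hu : u ∈ t := hp u (by simp)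
      have hc : c ∈ t := hp c (by simp)
      exact ih (h.trans (RIn.adj hu hc hadj))
        (fun x hx => hp x (by simp [hx])) hv

/-- From a walk containing `x ≠ a`, extract a neighbor `y` of `x` reachable from `a`
avoiding `x`. -/
lemma exists_nbr_of_mem_support {a b x : V} (w : G.Walk a b) (hx : x ∈ w.support)
    (hax : a ≠ x) :
    ∃ (y : V) (w' : G.Walk a y), G.Adj x y ∧ (∀ z ∈ w'.support, z ∈ w.support) ∧
      x ∉ w'.support := by
  induction w with
  | nil => simp at hx; exact absurd hx.symm hax
  | @cons a c b hadj q ih =>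
    by_cases hcx : c = x
    · subst hcx
      exact ⟨a, Walk.nil, hadj.symm, by simp, by simpa using (Ne.symm hax)⟩
    · have hxq : x ∈ q.support := by
        rcases (by simpa using hx : x = a ∨ x ∈ q.support) with rfl | h
        · exact absurd rfl hax
        · exact h
      obtain ⟨y, w', hadj', hsub, hxw'⟩ := ih hxq hcx
      refine ⟨y, Walk.cons hadj w', hadj', ?_, ?_⟩
      · intro z hz
        rcases (by simpa using hz : z = a ∨ z ∈ w'.support) with rfl | hz
        · simp
        · simp [hsub z hz]
      · intro hmem
        rcases (by simpa using hmem : x = a ∨ x ∈ w'.support) with rfl | h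
        · exact hax rfl
        · exact hxw' h


lemma RIn_def {V : Type*} {G : SimpleGraph V} {t : Set V} {u v : V} :
    RIn G t u v ↔ ∃ p : G.Walk u v, ∀ x ∈ p.support, x ∈ t := Iff.rfl

variable {V : Type*} {G : SimpleGraph V}

-- placeholders from previous files

lemma exists_min_path (x y : V) (A : Set V)
    (hne : ∃ p : G.Walk x y, ∀ v ∈ p.support, v = x ∨ v = y ∨ v ∈ A) :
    ∃ p : G.Walk x y, p.IsPath ∧ (∀ v ∈ p.support, v = x ∨ v = y ∨ v ∈ A) ∧
      ∀ q : G.Walk x y, (∀ v ∈ q.support, v = x ∨ v = y ∨ v ∈ A) →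
        p.length ≤ q.length := by
  classical
  set N : Set ℕ := {n | ∃ p : G.Walk x y, p.length = n ∧
    ∀ v ∈ p.support, v = x ∨ v = y ∨ v ∈ A} with hN
  have hNne : N.Nonempty := by obtain ⟨p, hp⟩ := hne; exact ⟨p.length, p, rfl, hp⟩
  obtain ⟨p₀, hlen, hcond⟩ := Nat.sInf_mem hNne
  refine ⟨p₀.bypass, p₀.bypass_isPath, ?_, ?_⟩
  · intro v hv; exact hcond v (p₀.support_bypass_subset hv)
  · intro q hq
    calc p₀.bypass.length ≤ p₀.length := p₀.length_bypass_le
      _ = sInf N := hlen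
      _ ≤ q.length := Nat.sInf_le ⟨q, rfl, hq⟩

/-- The heart of Dirac's argument: two vertices attached to two disjoint, internally
connected, mutually non-adjacent regions are adjacent, by chordality. -/
lemma adj_of_sep (hΓ : IsChordal G) (A B : Set V) (x y : V)
    (hdisj : ∀ v, v ∈ A → v ∈ B → False)
    (hAB : ∀ u ∈ A, ∀ v ∈ B, ¬G.Adj u v)
    (hxA : x ∉ A) (hxB : x ∉ B) (hyA : y ∉ A) (hyB : y ∉ B) (hxy : x ≠ y)
    (hxa : ∃ u ∈ A, G.Adj x u) (hya : ∃ u ∈ A, G.Adj y u)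
    (hxb : ∃ u ∈ B, G.Adj x u) (hyb : ∃ u ∈ B, G.Adj y u)
    (hAconn : ∀ u ∈ A, ∀ v ∈ A, RIn G A u v)
    (hBconn : ∀ u ∈ B, ∀ v ∈ B, RIn G B u v) :
    G.Adj x y := by
  classical
  by_contra hnadj
  -- minimal path through A
  have hneA : ∃ p : G.Walk x y, ∀ v ∈ p.support, v = x ∨ v = y ∨ v ∈ A := by
    obtain ⟨a₁, ha₁, hxa₁⟩ := hxa
    obtain ⟨a₂, ha₂, hya₂⟩ := hya
    obtain ⟨r, hr⟩ := RIn_def.mp (hAconn a₁ ha₁ a₂ ha₂)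
    refine ⟨Walk.cons hxa₁ (r.concat hya₂.symm), ?_⟩
    intro v hv
    simp only [Walk.support_cons, Walk.support_concat, List.concat_eq_append,
      List.mem_cons, List.mem_append, List.mem_singleton] at hv
    rcases hv with rfl | hv | hv
    · exact Or.inl rfl
    · exact Or.inr (Or.inr (hr v hv))
    · simp at hv; subst hv; exact Or.inr (Or.inl rfl)
  have hneB : ∃ p : G.Walk x y, ∀ v ∈ p.support, v = x ∨ v = y ∨ v ∈ B := by
    obtain ⟨b₁, hb₁, hxb₁⟩ := hxb
    obtain ⟨b₂, hb₂, hyb₂⟩ := hyb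
    obtain ⟨r, hr⟩ := RIn_def.mp (hBconn b₁ hb₁ b₂ hb₂)
    refine ⟨Walk.cons hxb₁ (r.concat hyb₂.symm), ?_⟩
    intro v hv
    simp only [Walk.support_cons, Walk.support_concat, List.concat_eq_append,
      List.mem_cons, List.mem_append, List.mem_singleton] at hv
    rcases hv with rfl | hv | hv
    · exact Or.inl rfl
    · exact Or.inr (Or.inr (hr v hv))
    · simp at hv; subst hv; exact Or.inr (Or.inl rfl)
  obtain ⟨p, hpP, hpA, hpmin⟩ := exists_min_path x y A hneA
  obtain ⟨q, hqP, hqB, hqmin⟩ := exists_min_path x y B hneB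
  set m := p.length with hm
  set n := q.length with hn
  -- lengths at least 2
  have hm2 : 2 ≤ m := by
    rcases Nat.lt_or_ge m 2 with h | h
    · interval_cases m
      · exact absurd (Walk.eq_of_length_eq_zero hm.symm) hxy
      · exact absurd (by
          have h01 : G.Adj (p.getVert 0) (p.getVert 1) :=
            p.adj_getVert_succ (by omega)
          rwa [Walk.getVert_zero, show (1:ℕ) = p.length by omega,
            Walk.getVert_length] at h01) hnadj
    · exact h
  have hn2 : 2 ≤ n := by
    rcases Nat.lt_or_ge n 2 with h | h
    · interval_cases n
      · exact absurd (Walk.eq_of_length_eq_zero hn.symm) hxy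
      · exact absurd (by
          have h01 : G.Adj (q.getVert 0) (q.getVert 1) :=
            q.adj_getVert_succ (by omega)
          rwa [Walk.getVert_zero, show (1:ℕ) = q.length by omega,
            Walk.getVert_length] at h01) hnadj
    · exact h
  -- the common support of p and q is {x, y}
  have hcommon : ∀ v, v ∈ p.support → v ∈ q.support → v = x ∨ v = y := by
    intro v hvp hvq
    rcases hpA v hvp with rfl | rfl | hvA
    · exact Or.inl rfl
    · exact Or.inr rfl
    · rcases hqB v hvq with rfl | rfl | hvB
      · exact absurd hvA hxA
      · exact absurd hvA hyA
      · exact absurd hvB (fun h => hdisj v hvA h)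
  -- the cycle
  set C : G.Walk x x := p.append q.reverse with hC
  have hClen : C.length = m + n := by
    rw [hC, Walk.length_append, Walk.length_reverse]
  have hCcyc : C.IsCycle := by
    have hqrP : q.reverse.IsPath := hqP.reverse
    constructor
    constructor
    constructor
    · -- edges nodup
      rw [hC, Walk.edges_append]
      refine List.Nodup.append hpP.isTrail.edges_nodup hqrP.isTrail.edges_nodup ?_
      intro e hep heq
      induction e with
      | _ u v =>
        have hadj := p.adj_of_mem_edges hep
        have heq' : s(u,v) ∈ q.edges := by
          rwa [Walk.edges_reverse, List.mem_reverse] at heq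
        have hu : u ∈ p.support := p.fst_mem_support_of_mem_edges hep
        have hv : v ∈ p.support := p.snd_mem_support_of_mem_edges hep
        have hu' : u ∈ q.support := q.fst_mem_support_of_mem_edges heq'
        have hv' : v ∈ q.support := q.snd_mem_support_of_mem_edges heq'
        rcases hcommon u hu hu' with rfl | rfl <;>
          rcases hcommon v hv hv' with rfl | rfl
        · exact hadj.ne rfl
        · exact hnadj hadj
        · exact hnadj hadj.symm
        · exact hadj.ne rfl
    · -- ne nil
      intro h
      have : C.length = 0 := by rw [h]; rfl
      omega
    · -- support tail nodup
      have hsupp : C.support = p.support ++ q.reverse.support.tail := by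
        rw [hC, Walk.support_append]
      have htail : C.support.tail = p.support.tail ++ q.reverse.support.tail := by
        rw [hsupp, p.support_eq_cons]; rfl
      rw [htail]
      have hpnd : p.support.tail.Nodup := by
        have := hpP.support_nodup
        rw [p.support_eq_cons, List.nodup_cons] at this
        exact this.2
      have hqnd : q.reverse.support.tail.Nodup := by
        have := hqrP.support_nodup
        rw [q.reverse.support_eq_cons, List.nodup_cons] at this
        exact this.2
      refine List.Nodup.append hpnd hqnd ?_
      intro v hvp hvq
      have hvx : v ≠ x := by
        have := hpP.support_nodup
        rw [p.support_eq_cons, List.nodup_cons] at this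
        intro h; subst h; exact this.1 hvp
      have hvy : v ≠ y := by
        have := hqrP.support_nodup
        rw [q.reverse.support_eq_cons, List.nodup_cons] at this
        intro h; subst h; exact this.1 hvq
      have hvp' : v ∈ p.support := List.mem_of_mem_tail hvp
      have hvq' : v ∈ q.support := by
        have : v ∈ q.reverse.support := List.mem_of_mem_tail hvq
        rwa [Walk.support_reverse, List.mem_reverse] at this
      rcases hcommon v hvp' hvq' with rfl | rfl
      · exact hvx rfl
      · exact hvy rfl
  -- apply chordality
  obtain ⟨i, j, hij, hjlt, hnotex, hadj⟩ := hΓ C hCcyc (by omega)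
  rw [hClen] at hjlt
  -- getVert computations
  have hgetlo : ∀ k, k < m → C.getVert k = p.getVert k := by
    intro k hk
    rw [hC, Walk.getVert_append, if_pos hk]
  have hgethi : ∀ k, m ≤ k → C.getVert k = q.reverse.getVert (k - m) := by
    intro k hk
    rw [hC, Walk.getVert_append, if_neg (by omega)]
  -- contradiction helpers
  have hcontraA : ∀ i' j' : ℕ, i' + 2 ≤ j' → j' ≤ m →
      G.Adj (p.getVert i') (p.getVert j') → False := by
    intro i' j' h1 h2 h3
    obtain ⟨r, hrlen, hrsub⟩ := exists_shortcut p h1 h2 h3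
    have := hpmin r (fun v hv => hpA v (hrsub hv))
    omega
  have hcontraB : ∀ i' j' : ℕ, i' + 2 ≤ j' → j' ≤ n →
      G.Adj (q.reverse.getVert i') (q.reverse.getVert j') → False := by
    intro i' j' h1 h2 h3
    obtain ⟨r, hrlen, hrsub⟩ := exists_shortcut q.reverse h1
      (by rwa [Walk.length_reverse]) h3
    rw [Walk.length_reverse] at hrlen
    have hsub : r.reverse.support ⊆ q.support := by
      intro v hv
      rw [Walk.support_reverse, List.mem_reverse] at hv
      have := hrsub hv
      rwa [Walk.support_reverse, List.mem_reverse] at this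
    have := hqmin r.reverse (fun v hv => hqB v (hsub hv))
    rw [Walk.length_reverse] at this
    omega
  rcases Nat.lt_or_ge j (m+1) with hjm | hjm
  · -- j ≤ m : chord inside p
    have hjm' : j ≤ m := by omega
    have hvj : C.getVert j = p.getVert j := by
      rcases Nat.lt_or_ge j m with h | h
      · exact hgetlo j h
      · have hjeq : j = m := by omega
        subst hjeq
        rw [hgethi m le_rfl, Nat.sub_self, Walk.getVert_zero]
        rw [hm]
        exact (Walk.getVert_length p).symm
    have hvi : C.getVert i = p.getVert i := hgetlo i (by omega)
    rw [hvi, hvj] at hadj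
    exact hcontraA i j hij hjm' hadj
  · rcases Nat.lt_or_ge i m with him | him
    · -- i < m < j
      have hjm2 : m < j := by omega
      have hvi : C.getVert i = p.getVert i := hgetlo i him
      have hvj : C.getVert j = q.reverse.getVert (j - m) := hgethi j (by omega)
      have hjmn : j - m ≤ n := by omega
      have hvjsupp : C.getVert j ∈ q.support := by
        rw [hvj]
        have : q.reverse.getVert (j - m) ∈ q.reverse.support :=
          Walk.mem_support_iff_exists_getVert.mpr ⟨j - m, rfl, by
            rw [Walk.length_reverse]; omega⟩
        rwa [Walk.support_reverse, List.mem_reverse] at this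
      have hvisupp : C.getVert i ∈ p.support := by
        rw [hvi]
        exact Walk.mem_support_iff_exists_getVert.mpr ⟨i, rfl, by omega⟩
      -- classify C.getVert j
      have hvjcls : C.getVert j ∈ B := by
        rcases hqB _ hvjsupp with hx' | hy' | hB'
        · -- C.getVert j = x : impossible since j - m < n
          exfalso
          have : q.reverse.getVert (j - m) = q.reverse.getVert q.reverse.length := by
            rw [Walk.getVert_length, ← hvj, hx']
          have := IsPath.getVert_injOn hqP.reverse
            (by rw [Walk.length_reverse]; omega) (le_refl _) this
          rw [Walk.length_reverse] at this
          omega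
        · -- C.getVert j = y : impossible since j - m > 0
          exfalso
          have : q.reverse.getVert (j - m) = q.reverse.getVert 0 := by
            rw [Walk.getVert_zero, ← hvj, hy']
          have := IsPath.getVert_injOn hqP.reverse
            (by rw [Walk.length_reverse]; omega) (by omega) this
          omega
        · exact hB'
      rcases hpA _ hvisupp with hx' | hy' | hA'
      · -- C.getVert i = x : chord from x into B; shortcut q
        have hi0 : i = 0 := by
          have : p.getVert i = p.getVert 0 := by rw [Walk.getVert_zero, ← hvi, hx']
          exact IsPath.getVert_injOn hpP (by omega) (by omega) this
        have hjlt' : j + 1 < m + n := by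
          rcases Nat.lt_or_ge (j+1) (m+n) with h | h
          · exact h
          · exact absurd ⟨hi0, by omega⟩ hnotex
        -- chord between q.reverse.getVert (j-m) and q.reverse.getVert n = x
        refine hcontraB (j - m) n (by omega) le_rfl ?_
        have hxn : q.reverse.getVert n = x := by
          rw [show n = q.reverse.length from (Walk.length_reverse q).symm]
          exact Walk.getVert_length _
        rw [hxn, ← hvj]
        rw [hx'] at hadj
        exact hadj.symm
      · -- C.getVert i = y : impossible, i < m
        exfalso
        have hpm : p.getVert m = y := by rw [hm]; exact Walk.getVert_length p
        have : p.getVert i = p.getVert m := by rw [hpm, ← hvi, hy']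
        have := IsPath.getVert_injOn hpP (by omega) (by omega) this
        omega
      · -- C.getVert i ∈ A, C.getVert j ∈ B : contradiction
        exact hAB _ hA' _ hvjcls hadj
    · -- m ≤ i : chord inside q.reverse
      have hvi : C.getVert i = q.reverse.getVert (i - m) := hgethi i him
      have hvj : C.getVert j = q.reverse.getVert (j - m) := hgethi j (by omega)
      rw [hvi, hvj] at hadj
      exact hcontraB (i - m) (j - m) (by omega) (by omega) hadj


variable {V : Type*} {G : SimpleGraph V}


/-- Simplicial within a finite vertex set. -/
def SimpIn (G : SimpleGraph V) (s : Finset V) (v : V) : Prop :=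
  ∀ u ∈ s, ∀ w ∈ s, G.Adj v u → G.Adj v w → u ≠ w → G.Adj u w

/-- Extracting a simplicial vertex from one side of the separator. -/
lemma half [DecidableEq V] {N : ℕ}
    (ih : ∀ s : Finset V, s.card ≤ N → ∀ a ∈ s, ∀ b ∈ s, a ≠ b → ¬G.Adj a b →
      ∃ v ∈ s, ∃ w ∈ s, v ≠ w ∧ ¬G.Adj v w ∧ SimpIn G s v ∧ SimpIn G s w)
    (s A S : Finset V) (a : V) (haA : a ∈ A)
    (hclose : ∀ v ∈ A, ∀ u ∈ s, G.Adj v u → u ∈ A ∪ S)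
    (hSclique : ∀ x ∈ S, ∀ y ∈ S, x ≠ y → G.Adj x y)
    (hcard : (A ∪ S).card ≤ N) :
    ∃ v ∈ A, SimpIn G s v := by
  classical
  by_cases hcl : ∀ x ∈ A ∪ S, ∀ y ∈ A ∪ S, x ≠ y → G.Adj x y
  · refine ⟨a, haA, ?_⟩
    intro u hu w hw hau haw huw
    exact hcl u (hclose a haA u hu hau) w (hclose a haA w hw haw) huw
  · push_neg at hcl
    obtain ⟨x, hx, y, hy, hxy, hnadj⟩ := hcl
    obtain ⟨v, hv, w, hw, hvw, hnvw, hsv, hsw⟩ :=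
      ih (A ∪ S) hcard x hx y hy hxy hnadj
    have hAtrans : ∀ z ∈ A ∪ S, z ∈ A → SimpIn G (A ∪ S) z → SimpIn G s z := by
      intro z _ hzA hz
      intro u hu w' hw' h1 h2 h3
      exact hz u (hclose z hzA u hu h1) w' (hclose z hzA w' hw' h2) h1 h2 h3
    rcases Finset.mem_union.mp hv with hvA | hvS
    · exact ⟨v, hvA, hAtrans v hv hvA hsv⟩
    · rcases Finset.mem_union.mp hw with hwA | hwS
      · exact ⟨w, hwA, hAtrans w hw hwA hsw⟩
      · exact absurd (hSclique v hvS w hwS hvw) hnvw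

lemma key (hΓ : IsChordal G) :
    ∀ (N : ℕ) (s : Finset V), s.card ≤ N →
      ∀ a ∈ s, ∀ b ∈ s, a ≠ b → ¬G.Adj a b →
      ∃ v ∈ s, ∃ w ∈ s, v ≠ w ∧ ¬G.Adj v w ∧ SimpIn G s v ∧ SimpIn G s w := by
  intro N
  induction N with
  | zero =>
    intro s hs a ha
    rw [Nat.le_zero, Finset.card_eq_zero] at hs
    subst hs
    exact absurd ha (by simp)
  | succ N ih =>
    intro s hcard a ha b hb hab hnadj
    classical
    -- the separator family
    set 𝒮 := (s \ {a, b}).powerset.filter (fun S => ¬ RIn G (↑(s \ S)) a b) with h𝒮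
    have hSsep0 : (s \ {a, b}) ∈ 𝒮 := by
      rw [h𝒮, Finset.mem_filter]
      refine ⟨Finset.mem_powerset_self _, ?_⟩
      intro hR
      obtain ⟨p, hp⟩ := RIn_def.mp hR
      -- support of p lies in s \ (s \ {a,b}) ⊆ {a, b}
      have hps : ∀ x ∈ p.support, x = a ∨ x = b := by
        intro x hx
        have hmem := hp x hx
        rw [Finset.mem_coe, Finset.mem_sdiff] at hmem
        by_contra hcon
        push_neg at hcon
        exact hmem.2 (Finset.mem_sdiff.mpr ⟨hmem.1, by
          simp [Finset.mem_insert, hcon.1, hcon.2]⟩)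
      -- then p gives an edge between a and b
      have hnnil : ¬ p.Nil := by
        intro h
        exact hab (Walk.Nil.eq h)
      have hadj1 : G.Adj a (p.getVert 1) := p.adj_snd hnnil
      have h1s : p.getVert 1 ∈ p.support :=
        Walk.mem_support_iff_exists_getVert.mpr ⟨1, rfl, by
          have := Walk.not_nil_iff_lt_length.mp hnnil; omega⟩
      rcases hps _ h1s with h1 | h1
      · exact hadj1.ne' (by rw [h1])
      · exact hnadj (by rwa [h1] at hadj1)
    obtain ⟨S, hS𝒮, hSmin⟩ := Finset.exists_min_image 𝒮 Finset.card ⟨_, hSsep0⟩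
    rw [h𝒮, Finset.mem_filter, Finset.mem_powerset] at hS𝒮
    obtain ⟨hSsub, hSsep⟩ := hS𝒮
    set t : Set V := ↑(s \ S) with ht
    have hamem : a ∈ s \ S := by
      rw [Finset.mem_sdiff]
      exact ⟨ha, fun h => by simpa using (Finset.mem_sdiff.mp (hSsub h)).2⟩
    have hbmem : b ∈ s \ S := by
      rw [Finset.mem_sdiff]
      exact ⟨hb, fun h => by simpa using (Finset.mem_sdiff.mp (hSsub h)).2⟩
    set A : Finset V := (s \ S).filter (fun x => RIn G t a x) with hA
    set B : Finset V := (s \ S).filter (fun x => RIn G t b x) with hB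
    have hAmem : ∀ x, x ∈ A ↔ x ∈ s \ S ∧ RIn G t a x := by
      intro x; rw [hA, Finset.mem_filter]
    have hBmem : ∀ x, x ∈ B ↔ x ∈ s \ S ∧ RIn G t b x := by
      intro x; rw [hB, Finset.mem_filter]
    have haA : a ∈ A := (hAmem a).mpr ⟨hamem, RIn.refl (by simpa [ht] using hamem)⟩
    have hbB : b ∈ B := (hBmem b).mpr ⟨hbmem, RIn.refl (by simpa [ht] using hbmem)⟩
    have hdisjAB : ∀ v, v ∈ A → v ∈ B → False := by
      intro v hvA hvB
      exact hSsep (((hAmem v).mp hvA).2.trans (((hBmem v).mp hvB).2).symm)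
    have hAclose : ∀ v ∈ A, ∀ u ∈ s, G.Adj v u → u ∈ A ∪ S := by
      intro v hvA u hu hadj
      rw [Finset.mem_union]
      by_cases huS : u ∈ S
      · exact Or.inr huS
      · refine Or.inl ((hAmem u).mpr ⟨Finset.mem_sdiff.mpr ⟨hu, huS⟩, ?_⟩)
        obtain ⟨hvt, hva⟩ := (hAmem v).mp hvA
        exact hva.trans (RIn.adj (show v ∈ t by rw [ht, Finset.mem_coe]; exact hvt)
          (show u ∈ t by rw [ht, Finset.mem_coe]; exact Finset.mem_sdiff.mpr ⟨hu, huS⟩) hadj)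
    have hBclose : ∀ v ∈ B, ∀ u ∈ s, G.Adj v u → u ∈ B ∪ S := by
      intro v hvB u hu hadj
      rw [Finset.mem_union]
      by_cases huS : u ∈ S
      · exact Or.inr huS
      · refine Or.inl ((hBmem u).mpr ⟨Finset.mem_sdiff.mpr ⟨hu, huS⟩, ?_⟩)
        obtain ⟨hvt, hvb⟩ := (hBmem v).mp hvB
        exact hvb.trans (RIn.adj (show v ∈ t by rw [ht, Finset.mem_coe]; exact hvt)
          (show u ∈ t by rw [ht, Finset.mem_coe]; exact Finset.mem_sdiff.mpr ⟨hu, huS⟩) hadj)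
    have hABedge : ∀ u ∈ A, ∀ v ∈ B, ¬G.Adj u v := by
      intro u huA v hvB hadj
      obtain ⟨hut, hua⟩ := (hAmem u).mp huA
      obtain ⟨hvt, _⟩ := (hBmem v).mp hvB
      have : v ∈ A := (hAmem v).mpr ⟨hvt,
        hua.trans (RIn.adj (by simpa [ht] using hut) (by simpa [ht] using hvt) hadj)⟩
      exact hdisjAB v this hvB
    -- neighbors of separator vertices
    have hSnbr : ∀ x ∈ S, (∃ u ∈ A, G.Adj x u) ∧ (∃ u ∈ B, G.Adj x u) := by
      intro x hxS
      have hax : a ≠ x := by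
        intro h
        have h2 := (Finset.mem_sdiff.mp (hSsub (h ▸ hxS))).2
        simp at h2
      have hbx : b ≠ x := by
        intro h
        have h2 := (Finset.mem_sdiff.mp (hSsub (h ▸ hxS))).2
        simp at h2
      have hcardlt : (S.erase x).card < S.card := Finset.card_erase_lt_of_mem hxS
      have hmem𝒮 : S.erase x ∉ 𝒮 := fun h => absurd (hSmin _ h) (by omega)
      have hR : RIn G (↑(s \ S.erase x)) a b := by
        by_contra h
        exact hmem𝒮 (by
          rw [h𝒮, Finset.mem_filter, Finset.mem_powerset]
          exact ⟨(Finset.erase_subset x S).trans hSsub, h⟩)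
      obtain ⟨w, hw⟩ := RIn_def.mp hR
      have hxw : x ∈ w.support := by
        by_contra hxw
        refine hSsep (RIn_def.mpr ⟨w, fun z hz => ?_⟩)
        have hz' := hw z hz
        rw [Finset.mem_coe, Finset.mem_sdiff, Finset.mem_erase] at hz'
        rw [ht, Finset.mem_coe, Finset.mem_sdiff]
        exact ⟨hz'.1, fun hzS => hz'.2 ⟨fun h => hxw (h ▸ hz), hzS⟩⟩
      constructor
      · obtain ⟨y, w', hadjy, hsub, hxw'⟩ := exists_nbr_of_mem_support w hxw hax
        have hsubt : ∀ z ∈ w'.support, z ∈ s \ S := by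
          intro z hz
          have h1 := hw z (hsub z hz)
          rw [Finset.mem_coe, Finset.mem_sdiff, Finset.mem_erase] at h1
          have hzx : z ≠ x := fun h => hxw' (h ▸ hz)
          rw [Finset.mem_sdiff]
          exact ⟨h1.1, fun hzS => h1.2 ⟨hzx, hzS⟩⟩
        refine ⟨y, (hAmem y).mpr ⟨hsubt y w'.end_mem_support,
          RIn_def.mpr ⟨w', fun z hz => ?_⟩⟩, hadjy⟩
        rw [ht, Finset.mem_coe]
        exact hsubt z hz
      · obtain ⟨y, w', hadjy, hsub, hxw'⟩ := exists_nbr_of_mem_support w.reverse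
          (by rw [Walk.support_reverse]; exact List.mem_reverse.mpr hxw) hbx
        have hsubt : ∀ z ∈ w'.support, z ∈ s \ S := by
          intro z hz
          have h1 : z ∈ w.support := by
            have := hsub z hz
            rwa [Walk.support_reverse, List.mem_reverse] at this
          have h1' := hw z h1
          rw [Finset.mem_coe, Finset.mem_sdiff, Finset.mem_erase] at h1'
          have hzx : z ≠ x := fun h => hxw' (h ▸ hz)
          rw [Finset.mem_sdiff]
          exact ⟨h1'.1, fun hzS => h1'.2 ⟨hzx, hzS⟩⟩
        refine ⟨y, (hBmem y).mpr ⟨hsubt y w'.end_mem_support,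
          RIn_def.mpr ⟨w', fun z hz => ?_⟩⟩, hadjy⟩
        rw [ht, Finset.mem_coe]
        exact hsubt z hz
    -- helper facts
    have hnotA : ∀ z ∈ S, z ∉ A := fun z hz h =>
      (Finset.mem_sdiff.mp ((hAmem z).mp h).1).2 hz
    have hnotB : ∀ z ∈ S, z ∉ B := fun z hz h =>
      (Finset.mem_sdiff.mp ((hBmem z).mp h).1).2 hz
    have hwalkA : ∀ u ∈ A, RIn G (↑A : Set V) a u := by
      intro u hu
      obtain ⟨p, hp⟩ := RIn_def.mp ((hAmem u).mp hu).2
      refine RIn_def.mpr ⟨p, fun z hz => ?_⟩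
      have hzR : RIn G t a z :=
        RIn.mem_support (RIn.refl (show a ∈ t by
          rw [ht, Finset.mem_coe]; exact hamem)) p hp hz
      have hzt : z ∈ s \ S := by
        have := hp z hz
        rwa [ht, Finset.mem_coe] at this
      exact Finset.mem_coe.mpr ((hAmem z).mpr ⟨hzt, hzR⟩)
    have hwalkB : ∀ u ∈ B, RIn G (↑B : Set V) b u := by
      intro u hu
      obtain ⟨p, hp⟩ := RIn_def.mp ((hBmem u).mp hu).2
      refine RIn_def.mpr ⟨p, fun z hz => ?_⟩
      have hzR : RIn G t b z :=
        RIn.mem_support (RIn.refl (show b ∈ t by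
          rw [ht, Finset.mem_coe]; exact hbmem)) p hp hz
      have hzt : z ∈ s \ S := by
        have := hp z hz
        rwa [ht, Finset.mem_coe] at this
      exact Finset.mem_coe.mpr ((hBmem z).mpr ⟨hzt, hzR⟩)
    -- the separator is a clique
    have hSclique : ∀ x ∈ S, ∀ y ∈ S, x ≠ y → G.Adj x y := by
      intro x hxS y hyS hxy
      obtain ⟨⟨ux, hux, huxadj⟩, ⟨vx, hvx, hvxadj⟩⟩ := hSnbr x hxS
      obtain ⟨⟨uy, huy, huyadj⟩, ⟨vy, hvy, hvyadj⟩⟩ := hSnbr y hyS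
      exact adj_of_sep hΓ (↑A) (↑B) x y
        (fun v hv hv' => hdisjAB v (Finset.mem_coe.mp hv) (Finset.mem_coe.mp hv'))
        (fun u hu v hv => hABedge u (Finset.mem_coe.mp hu) v (Finset.mem_coe.mp hv))
        (fun h => hnotA x hxS (Finset.mem_coe.mp h))
        (fun h => hnotB x hxS (Finset.mem_coe.mp h))
        (fun h => hnotA y hyS (Finset.mem_coe.mp h))
        (fun h => hnotB y hyS (Finset.mem_coe.mp h))
        hxy
        ⟨ux, Finset.mem_coe.mpr hux, huxadj⟩
        ⟨uy, Finset.mem_coe.mpr huy, huyadj⟩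
        ⟨vx, Finset.mem_coe.mpr hvx, hvxadj⟩
        ⟨vy, Finset.mem_coe.mpr hvy, hvyadj⟩
        (fun u hu v hv => ((hwalkA u (Finset.mem_coe.mp hu)).symm).trans
          (hwalkA v (Finset.mem_coe.mp hv)))
        (fun u hu v hv => ((hwalkB u (Finset.mem_coe.mp hu)).symm).trans
          (hwalkB v (Finset.mem_coe.mp hv)))
    -- cardinality bounds
    have hAsub : A ∪ S ⊆ s := by
      apply Finset.union_subset
      · intro z hz
        exact (Finset.mem_sdiff.mp ((hAmem z).mp hz).1).1
      · intro z hz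
        exact (Finset.mem_sdiff.mp (hSsub hz)).1
    have hBsub : B ∪ S ⊆ s := by
      apply Finset.union_subset
      · intro z hz
        exact (Finset.mem_sdiff.mp ((hBmem z).mp hz).1).1
      · intro z hz
        exact (Finset.mem_sdiff.mp (hSsub hz)).1
    have hbnot : b ∉ A ∪ S := by
      rw [Finset.mem_union]
      rintro (h | h)
      · exact hdisjAB b h hbB
      · exact (Finset.mem_sdiff.mp hbmem).2 h
    have hanot : a ∉ B ∪ S := by
      rw [Finset.mem_union]
      rintro (h | h)
      · exact hdisjAB a haA h
      · exact (Finset.mem_sdiff.mp hamem).2 h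
    have hcardA : (A ∪ S).card ≤ N := by
      have hsub' : A ∪ S ⊆ s.erase b := fun z hz =>
        Finset.mem_erase.mpr ⟨fun h => hbnot (h ▸ hz), hAsub hz⟩
      have h1 := Finset.card_le_card hsub'
      have h2 := Finset.card_erase_of_mem hb
      omega
    have hcardB : (B ∪ S).card ≤ N := by
      have hsub' : B ∪ S ⊆ s.erase a := fun z hz =>
        Finset.mem_erase.mpr ⟨fun h => hanot (h ▸ hz), hBsub hz⟩
      have h1 := Finset.card_le_card hsub'
      have h2 := Finset.card_erase_of_mem ha
      omega
    -- extract simplicial vertices on both sides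
    obtain ⟨v, hvA, hvsimp⟩ := half ih s A S a haA hAclose hSclique hcardA
    obtain ⟨w, hwB, hwsimp⟩ := half ih s B S b hbB hBclose hSclique hcardB
    refine ⟨v, (Finset.mem_sdiff.mp ((hAmem v).mp hvA).1).1,
      w, (Finset.mem_sdiff.mp ((hBmem w).mp hwB).1).1,
      fun h => hdisjAB v hvA (h ▸ hwB), hABedge v hvA w hwB, hvsimp, hwsimp⟩

end ChordalAux

/-- Every finite chordal graph has a simplicial vertex, and every non-complete finite
chordal graph has two non-adjacent simplicial vertices. -/
theorem chordal_has_simplicial_vertex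
    {V : Type*} [Fintype V] [Nonempty V]
    (Γ : SimpleGraph V) (hΓ : IsChordal Γ) :
    (∃ v : V, IsSimplicial Γ v) ∧
      (Γ ≠ ⊤ → ∃ v w : V, v ≠ w ∧ ¬Γ.Adj v w ∧ IsSimplicial Γ v ∧ IsSimplicial Γ w) := by
  classical
  by_cases hall : ∀ a b : V, a ≠ b → Γ.Adj a b
  · constructor
    · obtain ⟨v⟩ := ‹Nonempty V›
      exact ⟨v, fun u w _ _ huw => hall u w huw⟩
    · intro hne
      exfalso
      apply hne
      ext u w
      simp only [SimpleGraph.top_adj]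
      exact ⟨fun h => h.ne, fun h => hall u w h⟩
  · push_neg at hall
    obtain ⟨a, b, hab, hnadj⟩ := hall
    obtain ⟨v, hv, w, hw, hvw, hnvw, hsv, hsw⟩ :=
      ChordalAux.key hΓ (Finset.univ.card) Finset.univ le_rfl a (by simp) b (by simp)
        hab hnadj
    have hv' : IsSimplicial Γ v := fun u u' h1 h2 h3 =>
      hsv u (by simp) u' (by simp) h1 h2 h3
    have hw' : IsSimplicial Γ w := fun u u' h1 h2 h3 =>
      hsw u (by simp) u' (by simp) h1 h2 h3
    exact ⟨⟨v, hv'⟩, fun _ => ⟨v, w, hvw, hnvw, hv', hw'⟩⟩
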